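/- For the generating function of splitting costs: if p_{n,k} = (a₁k + a₀)T_kT_{n−k}/((n−1)T_n) with T_n = [z^n]T(z) and T(z) = zΦ(T(z)), then multiplying the recurrence μ_n = ∑_{k=1}^{n−1} p_{n,k}(μ_k + μ_{n−k}) + r_n (n ≥ 2) by (n−1)T_n z^n and summing over n ≥ 2 yields the differential equation z·M'(z) − M(z) = a₁[z·M'(z)·T(z) + z·T'(z)·M(z)] + 2a₀·M(z)·T(z) + R(z), where M(z) := ∑_{n≥1} μ_n T_n z^n and R(z) := ∑_{n≥2}(n−1)T_n r_n z^n. (Formal power series identity.) -/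

import Mathlib

open Finset PowerSeries

private lemma xmulderiv (f : ℕ → ℝ) :
    (PowerSeries.X : ℝ⟦X⟧) * PowerSeries.derivativeFun (PowerSeries.mk f)
      = PowerSeries.mk (fun n => (n : ℝ) * f n) := by
  ext n
  cases n with
  | zero => simp
  | succ m =>
      rw [PowerSeries.coeff_succ_X_mul]
      change coeff m (derivative ℝ (PowerSeries.mk f)) = _
      rw [PowerSeries.coeff_derivative,
        PowerSeries.coeff_mk, PowerSeries.coeff_mk]
      push_cast; ring

private lemma range_to_Ico (n : ℕ) (g : ℕ → ℝ)
    (h0 : g 0 = 0) (hn' : g n = 0) :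
    ∑ k ∈ Finset.range (n+1), g k = ∑ k ∈ Finset.Ico 1 n, g k := by
  refine (Finset.sum_subset ?_ ?_).symm
  · intro x hx; simp only [Finset.mem_Ico] at hx; simp only [Finset.mem_range]; omega
  · intro x hx hnx
    simp only [Finset.mem_range] at hx
    simp only [Finset.mem_Ico, not_and, not_lt] at hnx
    have : x = 0 ∨ x = n := by omega
    rcases this with h | h <;> simp [h, h0, hn']

private lemma sum_reflect (n : ℕ) (T μ : ℕ → ℝ) :
    ∑ k ∈ Finset.Ico 1 n, T k * T (n - k) * μ (n - k)
      = ∑ k ∈ Finset.Ico 1 n, μ k * T k * T (n - k) := by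
  refine Finset.sum_nbij' (fun k => n - k) (fun k => n - k) ?_ ?_ ?_ ?_ ?_ <;>
    intro a ha <;> simp only [Finset.mem_Ico] at ha ⊢ <;> try omega
  have h1 : n - (n - a) = a := by omega
  rw [h1]; ring

/-- Translating the moment recurrence μ_n = ∑ p_{n,k}(μ_k + μ_{n−k}) + r_n,
with p_{n,k} = (a₁k + a₀)T_k T_{n−k}/((n−1)T_n), into the formal power series
differential equation z·M′(z) − M(z)
  = a₁[z·M′(z)·T(z) + z·T′(z)·M(z)] + 2a₀·M(z)·T(z) + R(z). -/
theorem stmt18 (a₀ a₁ : ℝ) (T μ r : ℕ → ℝ)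
    (hT : ∀ n : ℕ, 1 ≤ n → T n ≠ 0)
    (hrec : ∀ n : ℕ, 2 ≤ n →
      μ n = (∑ k ∈ Ico 1 n,
          (a₁ * k + a₀) * T k * T (n - k) / (((n : ℝ) - 1) * T n) *
            (μ k + μ (n - k))) + r n) :
    (PowerSeries.X * PowerSeries.derivativeFun
        (PowerSeries.mk fun n : ℕ => if n = 0 then 0 else μ n * T n) -
      PowerSeries.mk fun n : ℕ => if n = 0 then 0 else μ n * T n) =
    (PowerSeries.C a₁) *
        (PowerSeries.X * PowerSeries.derivativeFun
            (PowerSeries.mk fun n : ℕ => if n = 0 then 0 else μ n * T n) *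
            (PowerSeries.mk fun n : ℕ => if n = 0 then 0 else T n) +
          PowerSeries.X * PowerSeries.derivativeFun
            (PowerSeries.mk fun n : ℕ => if n = 0 then 0 else T n) *
            (PowerSeries.mk fun n : ℕ => if n = 0 then 0 else μ n * T n)) +
      (PowerSeries.C (2 * a₀)) *
        (PowerSeries.mk fun n : ℕ => if n = 0 then 0 else μ n * T n) *
        (PowerSeries.mk fun n : ℕ => if n = 0 then 0 else T n) +
      PowerSeries.mk fun n : ℕ =>
        if n < 2 then 0 else ((n : ℝ) - 1) * T n * r n := by
  rw [xmulderiv, xmulderiv]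
  ext n
  rw [map_sub, map_add, map_add, PowerSeries.coeff_C_mul, mul_assoc,
    PowerSeries.coeff_C_mul, map_add,
    PowerSeries.coeff_mul, PowerSeries.coeff_mul, PowerSeries.coeff_mul,
    Finset.Nat.sum_antidiagonal_eq_sum_range_succ_mk,
    Finset.Nat.sum_antidiagonal_eq_sum_range_succ_mk,
    Finset.Nat.sum_antidiagonal_eq_sum_range_succ_mk]
  simp only [PowerSeries.coeff_mk]
  rcases Nat.eq_zero_or_pos n with h0 | hn
  · subst h0; simp
  · rw [range_to_Ico n _ (by simp) (by simp),
      range_to_Ico n _ (by simp) (by simp),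
      range_to_Ico n _ (by simp) (by simp)]
    have e1 : (∑ k ∈ Finset.Ico 1 n,
        (↑k * if k = 0 then 0 else μ k * T k) * if n - k = 0 then 0 else T (n - k))
        = ∑ k ∈ Finset.Ico 1 n, (k : ℝ) * (μ k * T k) * T (n - k) := by
      refine Finset.sum_congr rfl fun k hk => ?_
      simp only [Finset.mem_Ico] at hk
      rw [if_neg (by omega), if_neg (by omega)]
    have e2 : (∑ k ∈ Finset.Ico 1 n,
        (↑k * if k = 0 then 0 else T k) * if n - k = 0 then 0 else μ (n - k) * T (n - k))
        = ∑ k ∈ Finset.Ico 1 n, (k : ℝ) * T k * (μ (n - k) * T (n - k)) := by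
      refine Finset.sum_congr rfl fun k hk => ?_
      simp only [Finset.mem_Ico] at hk
      rw [if_neg (by omega), if_neg (by omega)]
    have e3 : (∑ k ∈ Finset.Ico 1 n,
        (if k = 0 then 0 else μ k * T k) * if n - k = 0 then 0 else T (n - k))
        = ∑ k ∈ Finset.Ico 1 n, μ k * T k * T (n - k) := by
      refine Finset.sum_congr rfl fun k hk => ?_
      simp only [Finset.mem_Ico] at hk
      rw [if_neg (by omega), if_neg (by omega)]
    rw [e1, e2, e3]
    have hnn : n ≠ 0 := by omega
    simp only [hnn, if_false]
    rcases Nat.lt_or_ge n 2 with h2 | h2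
    · have : n = 1 := by omega
      subst this
      simp
    · have hD : ((n:ℝ) - 1) * T n ≠ 0 := by
        have : (2:ℝ) ≤ (n:ℝ) := by exact_mod_cast h2
        exact mul_ne_zero (by linarith) (hT n (by omega))
      have key : ((n:ℝ) - 1) * T n * μ n =
          (∑ k ∈ Finset.Ico 1 n,
            (a₁ * k + a₀) * T k * T (n - k) * (μ k + μ (n - k)))
          + ((n:ℝ) - 1) * T n * r n := by
        rw [hrec n h2, mul_add, Finset.mul_sum]
        congr 1
        refine Finset.sum_congr rfl fun k hk => ?_
        field_simp
        rw [div_eq_iff hD]; ring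
      have hlhs : (n:ℝ) * (μ n * T n) - μ n * T n = ((n:ℝ) - 1) * T n * μ n := by ring
      rw [hlhs, key]
      have hsplit : (∑ k ∈ Finset.Ico 1 n,
          (a₁ * k + a₀) * T k * T (n - k) * (μ k + μ (n - k)))
          = a₁ * ((∑ k ∈ Finset.Ico 1 n, (k:ℝ) * (μ k * T k) * T (n-k))
              + ∑ k ∈ Finset.Ico 1 n, (k:ℝ) * T k * (μ (n-k) * T (n-k)))
            + a₀ * (∑ k ∈ Finset.Ico 1 n, μ k * T k * T (n-k))
            + a₀ * (∑ k ∈ Finset.Ico 1 n, T k * T (n-k) * μ (n-k)) := by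
        rw [mul_add, Finset.mul_sum, Finset.mul_sum, ← Finset.sum_add_distrib,
          Finset.mul_sum, Finset.mul_sum, ← Finset.sum_add_distrib,
          ← Finset.sum_add_distrib]
        refine Finset.sum_congr rfl fun k hk => ?_
        ring
      rw [hsplit, sum_reflect n T μ]
      have : ¬ n < 2 := by omega
      simp only [this, if_false]
      ring
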